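/- In the algebra A = A_T(q_0,q_1,q_2,q_3), the relations imply that e_i x_{i+1}^{4T+2} = −q_i · e_i x_i^{4T+2} for every i (indices mod 4), and consequently e_i x_l^{4T+3} = 0 for l = 0,1 and all i; hence every path of length ≥ 4T+3 is zero in A. -/

import Mathlib

noncomputable section

/-- Generators: the vertices `e_i` (`i : ZMod 4`) and the arrows
`a_{l,m} : e_m → e_{m+1}` (`l : ZMod 2`, `m : ZMod 4`). -/
abbrev QGen : Type := (ZMod 4) ⊕ (ZMod 2 × ZMod 4)

variable (K : Type*) [Field K]

/-- The vertex generator `e_i` in the free algebra. -/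
def vgen (i : ZMod 4) : FreeAlgebra K QGen := FreeAlgebra.ι K (Sum.inl i)

/-- The arrow generator `a_{l,m}` in the free algebra. -/
def agen (l : ZMod 2) (m : ZMod 4) : FreeAlgebra K QGen := FreeAlgebra.ι K (Sum.inr (l, m))

/-- `x_l = Σ_m a_{l,m}` in the free algebra. -/
def xgen (l : ZMod 2) : FreeAlgebra K QGen := ∑ m : ZMod 4, agen K l m

/-- Reduction of a vertex index mod 4 to an `x`-index mod 2. -/
def toL (i : ZMod 4) : ZMod 2 := (i.val : ZMod 2)

/-- The defining relations of `A_T(q_0,q_1,q_2,q_3)`: the path-algebra relations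
of the cyclic quiver with vertices `e_0,…,e_3` and arrows
`a_{0,m}, a_{1,m} : e_m → e_{m+1}`, together with `x_l x_{l+1} = 0` and
`e_i (q_i x_i^{4T+2} + x_{i+1}^{4T+2}) = 0`. -/
inductive ARel (T : ℕ) (q : ZMod 4 → K) : FreeAlgebra K QGen → FreeAlgebra K QGen → Prop
  | vert (i j : ZMod 4) :
      ARel T q (vgen K i * vgen K j) (if i = j then vgen K i else 0)
  | sum_vert : ARel T q (∑ i : ZMod 4, vgen K i) 1
  | left (l : ZMod 2) (m : ZMod 4) : ARel T q (vgen K m * agen K l m) (agen K l m)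
  | right (l : ZMod 2) (m : ZMod 4) : ARel T q (agen K l m * vgen K (m + 1)) (agen K l m)
  | left_zero (l : ZMod 2) (m j : ZMod 4) (h : j ≠ m) : ARel T q (vgen K j * agen K l m) 0
  | right_zero (l : ZMod 2) (m j : ZMod 4) (h : j ≠ m + 1) : ARel T q (agen K l m * vgen K j) 0
  | zigzag (l : ZMod 2) : ARel T q (xgen K l * xgen K (l + 1)) 0
  | socle (i : ZMod 4) :
      ARel T q (vgen K i * (q i • xgen K (toL i) ^ (4 * T + 2)
        + xgen K (toL (i + 1)) ^ (4 * T + 2))) 0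

/-- The self-injective special biserial algebra `A = A_T(q_0,q_1,q_2,q_3)`. -/
def AT (T : ℕ) (q : ZMod 4 → K) : Type _ := RingQuot (ARel K T q)

instance (T : ℕ) (q : ZMod 4 → K) : Ring (AT K T q) := inferInstanceAs (Ring (RingQuot _))
instance (T : ℕ) (q : ZMod 4 → K) : Algebra K (AT K T q) :=
  inferInstanceAs (Algebra K (RingQuot _))

/-- The vertex idempotent `e_i` in `A`. -/
def Ae (T : ℕ) (q : ZMod 4 → K) (i : ZMod 4) : AT K T q :=
  RingQuot.mkAlgHom K (ARel K T q) (vgen K i)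

/-- The arrow `a_{l,m}` in `A`. -/
def Aa (T : ℕ) (q : ZMod 4 → K) (l : ZMod 2) (m : ZMod 4) : AT K T q :=
  RingQuot.mkAlgHom K (ARel K T q) (agen K l m)

/-- `x_l = Σ_m a_{l,m}` in `A`. -/
def Ax (T : ℕ) (q : ZMod 4 → K) (l : ZMod 2) : AT K T q :=
  RingQuot.mkAlgHom K (ARel K T q) (xgen K l)

/-- The `K`-linear map `a ↦ e_i · a · e_t` on `A`, whose range is the
subspace `e_i A e_t`. -/
def sandwich (T : ℕ) (q : ZMod 4 → K) (i t : ZMod 4) : AT K T q →ₗ[K] AT K T q :=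
  (LinearMap.mulLeft K (Ae K T q i)).comp (LinearMap.mulRight K (Ae K T q t))

section Aux

variable {K₀ : Type*} [Field K₀] {T : ℕ} {q : ZMod 4 → K₀}

private lemma mk_mul (a b : FreeAlgebra K₀ QGen) :
    (RingQuot.mkAlgHom K₀ (ARel K₀ T q) a : AT K₀ T q)
        * RingQuot.mkAlgHom K₀ (ARel K₀ T q) b
      = RingQuot.mkAlgHom K₀ (ARel K₀ T q) (a * b) := (map_mul _ a b).symm

private lemma mk_add (a b : FreeAlgebra K₀ QGen) :
    (RingQuot.mkAlgHom K₀ (ARel K₀ T q) a : AT K₀ T q)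
        + RingQuot.mkAlgHom K₀ (ARel K₀ T q) b
      = RingQuot.mkAlgHom K₀ (ARel K₀ T q) (a + b) := (map_add _ a b).symm

private lemma mk_smul (c : K₀) (a : FreeAlgebra K₀ QGen) :
    (c • (RingQuot.mkAlgHom K₀ (ARel K₀ T q) a) : AT K₀ T q)
      = RingQuot.mkAlgHom K₀ (ARel K₀ T q) (c • a) := (map_smul _ c a).symm

private lemma mk_pow (a : FreeAlgebra K₀ QGen) (n : ℕ) :
    ((RingQuot.mkAlgHom K₀ (ARel K₀ T q) a : AT K₀ T q) ^ n)
      = RingQuot.mkAlgHom K₀ (ARel K₀ T q) (a ^ n) := (map_pow _ a n).symm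

private lemma mk_zero : (0 : AT K₀ T q) = RingQuot.mkAlgHom K₀ (ARel K₀ T q) 0 :=
  (map_zero _).symm

private lemma AxSum (l : ZMod 2) : Ax K₀ T q l = ∑ m : ZMod 4, Aa K₀ T q l m := by
  rw [Ax, xgen, map_sum]; rfl

private lemma eMulE (i j : ZMod 4) :
    Ae K₀ T q i * Ae K₀ T q j = if i = j then Ae K₀ T q i else 0 := by
  rw [Ae, Ae]; erw [mk_mul]; rw [RingQuot.mkAlgHom_rel K₀ (ARel.vert i j)]
  split_ifs with h
  · exact (if_pos h).symm
  · exact (map_zero _).trans (if_neg h).symm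

private lemma eMulA (j : ZMod 4) (l : ZMod 2) (m : ZMod 4) :
    Ae K₀ T q j * Aa K₀ T q l m = if j = m then Aa K₀ T q l m else 0 := by
  by_cases h : j = m
  · subst h
    rw [if_pos rfl, Ae, Aa]; erw [mk_mul]; rw [RingQuot.mkAlgHom_rel K₀ (ARel.left l j)]
  · rw [if_neg h, Ae, Aa]; erw [mk_mul]; rw [
      RingQuot.mkAlgHom_rel K₀ (ARel.left_zero l m j h)]
    exact map_zero _

private lemma aMulE (l : ZMod 2) (m j : ZMod 4) :
    Aa K₀ T q l m * Ae K₀ T q j = if j = m + 1 then Aa K₀ T q l m else 0 := by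
  by_cases h : j = m + 1
  · subst h
    rw [if_pos rfl, Ae, Aa]; erw [mk_mul]; rw [RingQuot.mkAlgHom_rel K₀ (ARel.right l m)]
  · rw [if_neg h, Ae, Aa]; erw [mk_mul]; rw [
      RingQuot.mkAlgHom_rel K₀ (ARel.right_zero l m j h)]
    exact map_zero _

private lemma eMulX (m : ZMod 4) (l : ZMod 2) :
    Ae K₀ T q m * Ax K₀ T q l = Aa K₀ T q l m := by
  rw [AxSum, Finset.mul_sum, Finset.sum_eq_single m]
  · rw [eMulA, if_pos rfl]
  · intro b _ hb
    rw [eMulA, if_neg (Ne.symm hb)]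
  · intro h; exact absurd (Finset.mem_univ m) h

private lemma xMulE (l : ZMod 2) (m : ZMod 4) :
    Ax K₀ T q l * Ae K₀ T q (m + 1) = Aa K₀ T q l m := by
  rw [AxSum, Finset.sum_mul, Finset.sum_eq_single m]
  · rw [aMulE, if_pos rfl]
  · intro b _ hb
    rw [aMulE, if_neg (by simpa using (Ne.symm hb))]
  · intro h; exact absurd (Finset.mem_univ m) h

private lemma zig (l : ZMod 2) : Ax K₀ T q l * Ax K₀ T q (l + 1) = 0 := by
  rw [Ax, Ax]; erw [mk_mul]; rw [RingQuot.mkAlgHom_rel K₀ (ARel.zigzag l)]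
  exact map_zero _

private lemma socleA (i : ZMod 4) :
    q i • (Ae K₀ T q i * Ax K₀ T q (toL i) ^ (4 * T + 2))
      + Ae K₀ T q i * Ax K₀ T q (toL (i + 1)) ^ (4 * T + 2) = 0 := by
  rw [Ae, Ax, Ax]; erw [mk_pow, mk_pow, mk_mul, mk_mul, mk_smul, mk_add]; rw [
    show q i • (vgen K₀ i * xgen K₀ (toL i) ^ (4 * T + 2))
        + vgen K₀ i * xgen K₀ (toL (i + 1)) ^ (4 * T + 2)
      = vgen K₀ i * (q i • xgen K₀ (toL i) ^ (4 * T + 2)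
        + xgen K₀ (toL (i + 1)) ^ (4 * T + 2)) from by
      rw [mul_add, mul_smul_comm],
    RingQuot.mkAlgHom_rel K₀ (ARel.socle i)]
  exact map_zero _

private lemma part1 (i : ZMod 4) :
    Ae K₀ T q i * Ax K₀ T q (toL (i + 1)) ^ (4 * T + 2)
      = -(q i) • (Ae K₀ T q i * Ax K₀ T q (toL i) ^ (4 * T + 2)) := by
  have h := socleA (T := T) (q := q) i
  rw [neg_smul]
  exact eq_neg_of_add_eq_zero_right h

private lemma toL_succ : ∀ i : ZMod 4, toL (i + 1) = toL i + 1 := by decide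

private lemma part2 (hq : ∀ i, q i ≠ 0) (l : ZMod 2) (i : ZMod 4) :
    Ae K₀ T q i * Ax K₀ T q l ^ (4 * T + 3) = 0 := by
  have h11 : ∀ a : ZMod 2, a + 1 + 1 = a := by decide
  have h2 : Ae K₀ T q i * Ax K₀ T q (toL i + 1) ^ (4 * T + 2)
      = -(q i) • (Ae K₀ T q i * Ax K₀ T q (toL i) ^ (4 * T + 2)) := by
    rw [← toL_succ]; exact part1 i
  have hcases : l = toL i ∨ l = toL i + 1 :=
    (by decide : ∀ a b : ZMod 2, a = b ∨ a = b + 1) l (toL i)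
  have hsplit : (4 * T + 3) = (4 * T + 2) + 1 := rfl
  have hsplit2 : (4 * T + 2) = (4 * T + 1) + 1 := rfl
  rcases hcases with rfl | rfl
  · -- l = toL i
    have h1' : Ae K₀ T q i * Ax K₀ T q (toL i) ^ (4 * T + 2)
        = (-(q i)⁻¹) • (Ae K₀ T q i * Ax K₀ T q (toL i + 1) ^ (4 * T + 2)) := by
      rw [h2, smul_smul, neg_mul_neg, inv_mul_cancel₀ (hq i), one_smul]
    rw [hsplit, pow_succ, ← mul_assoc, h1', smul_mul_assoc, hsplit2, pow_succ,
      mul_assoc, mul_assoc, show Ax K₀ T q (toL i + 1) * Ax K₀ T q (toL i)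
        = 0 from by
          have hz := zig (T := T) (q := q) (toL i + 1)
          rwa [h11] at hz, mul_zero, mul_zero, smul_zero]
  · -- l = toL i + 1
    rw [hsplit, pow_succ, ← mul_assoc, h2, smul_mul_assoc, hsplit2, pow_succ,
      mul_assoc, mul_assoc, zig, mul_zero, mul_zero, smul_zero]

private lemma lemZ : ∀ (ls : List (ZMod 2)) (l : ZMod 2),
    Ax K₀ T q l * (ls.map (Ax K₀ T q)).prod = Ax K₀ T q l ^ (ls.length + 1)
      ∨ Ax K₀ T q l * (ls.map (Ax K₀ T q)).prod = 0 := by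
  intro ls
  induction ls with
  | nil => intro l; left; simp
  | cons l' ls ih =>
    intro l
    rw [List.map_cons, List.prod_cons]
    by_cases h : l' = l
    · subst h
      rcases ih l' with h' | h'
      · left
        rw [show Ax K₀ T q l' * (Ax K₀ T q l' * (ls.map (Ax K₀ T q)).prod)
            = Ax K₀ T q l' * (Ax K₀ T q l' ^ (ls.length + 1)) from by rw [h'],
          ← pow_succ']
        rfl
      · right
        rw [show Ax K₀ T q l' * (Ax K₀ T q l' * (ls.map (Ax K₀ T q)).prod)
            = Ax K₀ T q l' * (0 : AT K₀ T q) from by rw [h'], mul_zero]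
    · right
      have hl : l' = l + 1 := by
        revert h; revert l' l; decide
      subst hl
      rw [← mul_assoc, zig, zero_mul]

private lemma key3 : ∀ (ls : List (ZMod 2)), ls ≠ [] → ∀ (n : ℕ) (i : ZMod 4),
    ((ls.zipIdx n).map (fun p => Aa K₀ T q p.1 (i + (p.2 : ZMod 4)))).prod
      = Ae K₀ T q (i + (n : ZMod 4)) * (ls.map (Ax K₀ T q)).prod := by
  intro ls
  induction ls with
  | nil => intro h; exact absurd rfl h
  | cons l ls ih =>
    intro _ n i
    rw [List.zipIdx_cons, List.map_cons, List.prod_cons, List.map_cons,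
      List.prod_cons]
    rcases eq_or_ne ls [] with rfl | hne
    · simp [← eMulX (i + (n : ZMod 4)) l]
    · rw [ih hne (n + 1) i, ← mul_assoc,
        show ((n + 1 : ℕ) : ZMod 4) = (n : ZMod 4) + 1 from by push_cast; ring,
        ← add_assoc, aMulE, if_pos rfl, ← eMulX (i + (n : ZMod 4)) l, mul_assoc]

end Aux

/-- In `A = A_T(q₀,q₁,q₂,q₃)`: `e_i x_{i+1}^{4T+2} = -q_i · e_i x_i^{4T+2}`,
hence `e_i x_l^{4T+3} = 0` for all `i, l`, and every path of length `≥ 4T+3`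
(a product of consecutive arrows) is zero in `A`. -/
theorem stmt14 (T : ℕ) (q : ZMod 4 → K) (hq : ∀ i, q i ≠ 0) :
    (∀ i : ZMod 4,
      Ae K T q i * Ax K T q (toL (i + 1)) ^ (4 * T + 2)
        = -(q i) • (Ae K T q i * Ax K T q (toL i) ^ (4 * T + 2))) ∧
    (∀ (l : ZMod 2) (i : ZMod 4), Ae K T q i * Ax K T q l ^ (4 * T + 3) = 0) ∧
    (∀ (ls : List (ZMod 2)), 4 * T + 3 ≤ ls.length → ∀ i : ZMod 4,
      (ls.zipIdx.map (fun p => Aa K T q p.1 (i + (p.2 : ZMod 4)))).prod = 0) := by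
  refine ⟨fun i => part1 i, fun l i => part2 hq l i, ?_⟩
  intro ls hlen i
  match ls, hlen with
  | l :: ls', hlen =>
  rw [show (l :: ls').zipIdx = (l :: ls').zipIdx 0 from rfl,
    key3 _ (List.cons_ne_nil _ _) 0 i, Nat.cast_zero, add_zero,
    List.map_cons, List.prod_cons]
  rcases lemZ (T := T) (q := q) ls' l with h | h
  · rw [h]
    have hlen' : 4 * T + 3 ≤ ls'.length + 1 := by simpa using hlen
    rw [show ls'.length + 1 = (4 * T + 3) + (ls'.length + 1 - (4 * T + 3)) from
      (Nat.add_sub_cancel' hlen').symm, pow_add, ← mul_assoc, part2 hq, zero_mul]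
  · rw [h, mul_zero]

end
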